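/- For integers n ≥ 2, k ≥ 1, and m > 2ⁿ, let L_m be the n × n integer matrix whose first row is (m+1, m, m, …, m) and whose i-th row, for 2 ≤ i ≤ n, has entry 1 in columns 1 through i and entry 0 in columns i+1 through n. Then det(I − L_mᵏ) ≠ 0, i.e. I − L_mᵏ is invertible; equivalently, no k-th root of unity is an eigenvalue of L_m. -/

import Mathlib

/-- The `n × n` integer matrix `L_m` from Section 4 of the paper: the first row
is `(m+1, m, m, …, m)` and, for `2 ≤ i ≤ n` (1-indexed), the `i`-th row has
entry `1` in columns `1` through `i` and `0` in columns `i+1` through `n`. -/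
def Lmat (n : ℕ) (m : ℤ) : Matrix (Fin n) (Fin n) ℤ :=
  Matrix.of fun i j =>
    if (i : ℕ) = 0 then (if (j : ℕ) = 0 then m + 1 else m)
    else (if j ≤ i then 1 else 0)

/-- For `n ≥ 2`, `k ≥ 1` and `m > 2ⁿ`, the matrix
`I − L_mᵏ` is invertible, i.e. `det (I − L_mᵏ) ≠ 0`. -/
theorem det_one_sub_Lmat_pow_ne_zero (n : ℕ) (hn : 2 ≤ n) (k : ℕ) (hk : 1 ≤ k)
    (m : ℤ) (hm : 2 ^ n < m) :
    ((1 : Matrix (Fin n) (Fin n) ℤ) - (Lmat n m) ^ k).det ≠ 0 := by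
  intro hdet
  have hm0 : (0:ℤ) < m := lt_trans (by positivity) hm
  -- the complex matrix
  set A : Matrix (Fin n) (Fin n) ℂ := (Lmat n m).map (Int.cast : ℤ → ℂ) with hA
  have hAmap : A = (Int.castRingHom ℂ).mapMatrix (Lmat n m) := rfl
  have hdetC : ((1 : Matrix (Fin n) (Fin n) ℂ) - A ^ k).det = 0 := by
    have : ((Int.castRingHom ℂ).mapMatrix ((1 : Matrix (Fin n) (Fin n) ℤ) - (Lmat n m) ^ k)).det = 0 := by
      rw [← RingHom.map_det, hdet]; simp
    rwa [map_sub, map_one, map_pow, ← hAmap] at this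
  -- 1 is in the spectrum of A ^ k
  have h1 : (1:ℂ) ∈ spectrum ℂ (A ^ k) := by
    rw [spectrum.mem_iff]
    intro hu
    rw [Matrix.isUnit_iff_isUnit_det] at hu
    rw [show (algebraMap ℂ (Matrix (Fin n) (Fin n) ℂ)) 1 - A ^ k
        = (1 : Matrix (Fin n) (Fin n) ℂ) - A ^ k by rw [map_one], hdetC] at hu
    exact (not_isUnit_zero hu)
  -- spectral mapping
  rw [spectrum.map_pow_of_pos A (lt_of_lt_of_le one_pos hk)] at h1
  obtain ⟨lam, hlam, hlamk⟩ := h1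
  -- eigenvector
  have hdetlam : ((algebraMap ℂ (Matrix (Fin n) (Fin n) ℂ)) lam - A).det = 0 := by
    rw [spectrum.mem_iff] at hlam
    by_contra h
    exact hlam ((Matrix.isUnit_iff_isUnit_det _).2 (isUnit_iff_ne_zero.2 h))
  obtain ⟨w, hw0, hww⟩ := (Matrix.exists_mulVec_eq_zero_iff).2 hdetlam
  have heig : ∀ i, (A.mulVec w) i = lam * w i := by
    intro i
    have := congrFun hww i
    have h2 : lam * w i - A.mulVec w i = 0 := by
      simpa [Matrix.sub_mulVec, Matrix.algebraMap_eq_diagonal, Matrix.mulVec_diagonal] using this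
    exact (sub_eq_zero.mp h2).symm
  -- basic facts about lam
  have hk' : k ≠ 0 := by omega
  have hlam0 : lam ≠ 0 := by
    intro h; rw [h] at hlamk; simp [zero_pow hk'] at hlamk
  have habs : ‖lam‖ = 1 := by
    have h : ‖lam ^ k‖ = ‖(1:ℂ)‖ := congrArg (‖·‖) hlamk
    rw [norm_pow, norm_one] at h
    by_contra hne
    rcases lt_or_gt_of_ne hne with hlt | hgt
    · exact absurd h (ne_of_lt (pow_lt_one₀ (norm_nonneg _) hlt hk'))
    · exact absurd h (ne_of_gt (one_lt_pow₀ hgt hk'))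
  -- entries of A
  have hAent : ∀ i j : Fin n, A i j =
      if (i : ℕ) = 0 then (if (j : ℕ) = 0 then (m : ℂ) + 1 else (m : ℂ))
      else (if j ≤ i then 1 else 0) := by
    intro i j
    simp only [hA, Lmat, Matrix.map_apply, Matrix.of_apply]
    split_ifs <;> push_cast <;> ring
  -- partial sums
  set s : ℕ → ℂ := fun t => ∑ j : Fin n, if (j : ℕ) ≤ t then w j else 0 with hs
  have hn0 : 0 < n := by omega
  set i0 : Fin n := ⟨0, hn0⟩ with hi0def
  have hi0 : (i0 : ℕ) = 0 := rfl
  -- Fact 1 : rows i ≥ 1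
  have hF1 : ∀ i : Fin n, (i : ℕ) ≠ 0 → s (i : ℕ) = lam * w i := by
    intro i hi
    have h := heig i
    rw [Matrix.mulVec, dotProduct] at h
    rw [← h]
    simp only [hs]
    apply Finset.sum_congr rfl
    intro j _
    rw [hAent i j, if_neg hi]
    rcases le_or_gt j i with hji | hji
    · rw [if_pos hji, if_pos (Fin.le_def.mp hji), one_mul]
    · rw [if_neg (not_le.mpr hji), if_neg (not_le.mpr (Fin.lt_def.mp hji)), zero_mul]
  -- single-element sums
  have hsingle : ∀ (b : Fin n), (∑ j : Fin n, if (j : ℕ) = (b : ℕ) then w j else 0) = w b := by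
    intro b
    rw [show (fun (j : Fin n) => if (j : ℕ) = (b : ℕ) then w j else 0)
        = fun j => if j = b then w j else 0 by
      funext j; by_cases h : j = b
      · subst h; simp
      · rw [if_neg h, if_neg (fun hc => h (Fin.ext hc))]]
    simp
  -- s 0 = w i0
  have hs0 : s 0 = w i0 := by
    have h1 : s 0 = ∑ j : Fin n, if (j : ℕ) = (i0 : ℕ) then w j else 0 := by
      simp only [hs]
      apply Finset.sum_congr rfl
      intro j _
      by_cases hjz : (j : ℕ) = 0
      · rw [if_pos (Nat.le_zero.mpr hjz), if_pos (show (j : ℕ) = (i0 : ℕ) from hjz)]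
      · rw [if_neg (fun hc => hjz (Nat.le_zero.mp hc)), if_neg (show ¬((j : ℕ) = (i0 : ℕ)) from hjz)]
    rw [h1, hsingle i0]
  -- step
  have hstep : ∀ t (ht : t + 1 < n), s (t + 1) = s t + w ⟨t + 1, ht⟩ := by
    intro t ht
    have hpt : ∀ j : Fin n, (if (j : ℕ) ≤ t + 1 then w j else 0)
        = (if (j : ℕ) ≤ t then w j else 0) + (if (j : ℕ) = ((⟨t + 1, ht⟩ : Fin n) : ℕ) then w j else 0) := by
      intro j
      simp only []
      split_ifs with h1 h2 h3 h2 h3 <;> first | ring1 | (exfalso; omega)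
    simp only [hs, hpt, Finset.sum_add_distrib]
    rw [hsingle ⟨t + 1, ht⟩]
  -- recurrence
  have hrec : ∀ t (ht : t + 1 < n), lam * s t = (lam - 1) * s (t + 1) := by
    intro t ht
    have h1 := hF1 ⟨t + 1, ht⟩ (by simp)
    have h2 := hstep t ht
    simp only [] at h1
    -- s (t+1) = lam * w ⟨t+1⟩, w ⟨t+1⟩ = s (t+1) - s t
    have hw' : w ⟨t + 1, ht⟩ = s (t + 1) - s t := by rw [h2]; ring
    rw [hw'] at h1
    linear_combination h1
  -- induction
  have hind : ∀ t, t < n → lam ^ t * s 0 = (lam - 1) ^ t * s t := by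
    intro t
    induction t with
    | zero => intro _; simp
    | succ t ih =>
      intro ht
      have h1 := ih (by omega)
      have h2 := hrec t ht
      calc lam ^ (t + 1) * s 0 = lam * (lam ^ t * s 0) := by ring
        _ = lam * ((lam - 1) ^ t * s t) := by rw [h1]
        _ = (lam - 1) ^ t * (lam * s t) := by ring
        _ = (lam - 1) ^ t * ((lam - 1) * s (t + 1)) := by rw [h2]
        _ = (lam - 1) ^ (t + 1) * s (t + 1) := by ring
  -- row 0
  have hrow0 : (m : ℂ) * s (n - 1) = (lam - 1) * s 0 := by
    have h := heig i0
    rw [Matrix.mulVec, dotProduct] at h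
    have hsum : ∑ j : Fin n, A i0 j * w j
        = (m : ℂ) * s (n - 1) + w i0 := by
      have : ∀ j : Fin n, A i0 j * w j
          = (m : ℂ) * (if (j : ℕ) ≤ n - 1 then w j else 0) + (if (j : ℕ) = (i0 : ℕ) then w j else 0) := by
        intro j
        rw [hAent i0 j, if_pos hi0]
        have hj : (j : ℕ) ≤ n - 1 := by have := j.isLt; omega
        rw [if_pos hj, hi0]
        by_cases h0 : (j : ℕ) = 0
        · rw [if_pos h0, if_pos h0]; ring
        · rw [if_neg h0, if_neg h0]; ring
      rw [Finset.sum_congr rfl (fun j _ => this j), Finset.sum_add_distrib,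
        ← Finset.mul_sum, hsingle i0]
    rw [hsum] at h
    rw [hs0]
    linear_combination h
  have hmC : (m : ℂ) ≠ 0 := Int.cast_ne_zero.mpr (by omega)
  -- all partial sums zero gives contradiction
  have hzero : ¬ (∀ t, t < n → s t = 0) := by
    intro hall
    apply hw0
    funext i
    rcases Nat.eq_zero_or_pos (i : ℕ) with h0 | h0
    · have hii : i = i0 := Fin.ext (by rw [h0, hi0])
      have hwi : w i = 0 := by rw [hii, ← hs0, hall 0 (by omega)]
      simpa using hwi
    · have h := hF1 i (by omega)
      rw [hall (i : ℕ) i.isLt] at h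
      have hwi := (mul_eq_zero.mp h.symm).resolve_left hlam0
      simpa using hwi
  rcases eq_or_ne lam 1 with h1 | h1
  · -- lam = 1 : all sums vanish
    apply hzero
    intro t ht
    rcases Nat.lt_or_ge (t + 1) n with ht1 | ht1
    · have := hrec t ht1
      rw [h1] at this
      simpa using this
    · have htn : t = n - 1 := by omega
      subst htn
      rw [h1] at hrow0
      have : (m : ℂ) * s (n - 1) = 0 := by rw [hrow0]; ring
      exact (mul_eq_zero.mp this).resolve_left hmC
  · rcases eq_or_ne (s 0) 0 with h2 | h2
    · apply hzero
      intro t ht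
      have h := hind t ht
      rw [h2, mul_zero] at h
      exact (mul_eq_zero.mp h.symm).resolve_left (pow_ne_zero _ (sub_ne_zero.mpr h1))
    · -- main case : m * lam^(n-1) = (lam-1)^n
      have hkey := hind (n - 1) (by omega)
      have hmain : (m : ℂ) * lam ^ (n - 1) = (lam - 1) ^ n := by
        have h3 : (m : ℂ) * lam ^ (n - 1) * s 0 = (lam - 1) ^ n * s 0 := by
          have hn1 : (n - 1) + 1 = n := by omega
          calc (m : ℂ) * lam ^ (n - 1) * s 0 = (m : ℂ) * (lam ^ (n - 1) * s 0) := by ring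
            _ = (m : ℂ) * ((lam - 1) ^ (n - 1) * s (n - 1)) := by rw [hkey]
            _ = (lam - 1) ^ (n - 1) * ((m : ℂ) * s (n - 1)) := by ring
            _ = (lam - 1) ^ (n - 1) * ((lam - 1) * s 0) := by rw [hrow0]
            _ = (lam - 1) ^ ((n - 1) + 1) * s 0 := by ring
            _ = (lam - 1) ^ n * s 0 := by rw [hn1]
        exact mul_right_cancel₀ h2 h3
      -- take absolute values
      have habs2 : ‖lam - 1‖ ≤ 2 := by
        calc ‖lam - 1‖ ≤ ‖lam‖ + ‖(1:ℂ)‖ := by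
              simpa using norm_sub_le lam 1
          _ = 2 := by norm_num [habs]
      have hABS : ‖(m : ℂ) * lam ^ (n - 1)‖ = ‖(lam - 1) ^ n‖ := by rw [hmain]
      rw [norm_mul, norm_pow, norm_pow, habs, one_pow, mul_one] at hABS
      have hmabs : ‖(m : ℂ)‖ = (m : ℝ) := by
        rw [Complex.norm_intCast]
        exact _root_.abs_of_pos (by exact_mod_cast hm0)
      rw [hmabs] at hABS
      have hle : (m : ℝ) ≤ 2 ^ n := by
        rw [hABS]
        exact pow_le_pow_left₀ (norm_nonneg _) habs2 n
      have hgt : (2 : ℝ) ^ n < (m : ℝ) := by exact_mod_cast hm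
      linarith
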